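/- Let H be a self-adjoint operator on the finite-dimensional Hilbert space ℓ²(B_L(u)) with orthonormal eigenbasis {ψ_j} and eigenvalues {E_j}. Suppose (i) dist(E, spec(H)) ≥ e^{−L^β} for some E ∈ ℝ and 0 < β < 1, (ii) ln((2L+1)^d) ≤ L^β, and (iii) for every j and every x, y ∈ B_L(u) with ‖x−y‖ ≥ L^{7/8}, |ψ_j(x)|·|ψ_j(y)| ≤ e^{−γ‖x−y‖} where γ > 0. Then for every such pair x, y, the Green function G(x,y;E) = Σ_j ψ_j(x)·conj(ψ_j(y))/(E−E_j) satisfies |G(x,y;E)| ≤ e^{−γ‖x−y‖ + 2L^β}. -/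

import Mathlib

/-- Lemma 3.8 / Lemma in §4: an `m`-localized, `E`-non-resonant ball is `(E,m)`-non-singular.
If all eigenvalues `E_j` are at distance `≥ e^{-L^β}` from `E`, the number of eigenvalues is
at most `(2L+1)^d` with `ln (2L+1)^d ≤ L^β`, and every normalized eigenfunction satisfies
`|ψ_j(x)||ψ_j(y)| ≤ e^{-γ‖x-y‖}` for `‖x-y‖ ≥ L^{7/8}` in the ball, then the Green function
`G(x,y;E) = Σ_j ψ_j(x) conj(ψ_j(y))/(E-E_j)` satisfies `|G(x,y;E)| ≤ e^{-γ‖x-y‖+2L^β}`. -/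
theorem stmt_2 (d L : ℕ) (hL : 1 ≤ L) (u : Fin d → ℤ) (β γ E : ℝ)
    (hβ0 : 0 < β) (hβ1 : β < 1) (hγ : 0 < γ)
    (n : ℕ) (hn : (n : ℝ) ≤ (2 * (L : ℝ) + 1) ^ d)
    (ψ : Fin n → (Fin d → ℤ) → ℂ) (Ev : Fin n → ℝ)
    (hres : ∀ j, Real.exp (-(L : ℝ) ^ β) ≤ |E - Ev j|)
    (hlog : Real.log ((2 * (L : ℝ) + 1) ^ d) ≤ (L : ℝ) ^ β)
    (hloc : ∀ j, ∀ x y : Fin d → ℤ, ‖x - u‖ ≤ (L : ℝ) → ‖y - u‖ ≤ (L : ℝ) →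
      (L : ℝ) ^ ((7 : ℝ) / 8) ≤ ‖x - y‖ →
      ‖ψ j x‖ * ‖ψ j y‖ ≤ Real.exp (-γ * ‖x - y‖)) :
    ∀ x y : Fin d → ℤ, ‖x - u‖ ≤ (L : ℝ) → ‖y - u‖ ≤ (L : ℝ) →
      (L : ℝ) ^ ((7 : ℝ) / 8) ≤ ‖x - y‖ →
      ‖∑ j, ψ j x * (starRingEnd ℂ) (ψ j y) / ((E : ℂ) - (Ev j : ℂ))‖ ≤
        Real.exp (-γ * ‖x - y‖ + 2 * (L : ℝ) ^ β) := by
  intro x y hx hy hxy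
  have hterm : ∀ j : Fin n,
      ‖ψ j x * (starRingEnd ℂ) (ψ j y) / ((E : ℂ) - (Ev j : ℂ))‖ ≤
        Real.exp (-γ * ‖x - y‖) * Real.exp ((L : ℝ) ^ β) := by
    intro j
    have habs : ‖(E : ℂ) - (Ev j : ℂ)‖ = |E - Ev j| := by
      rw [← Complex.ofReal_sub, Complex.norm_real, Real.norm_eq_abs]
    have hEj : (0:ℝ) < |E - Ev j| :=
      lt_of_lt_of_le (Real.exp_pos _) (hres j)
    rw [norm_div, norm_mul, habs, Complex.norm_conj]
    rw [div_le_iff₀ hEj]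
    calc ‖ψ j x‖ * ‖ψ j y‖
        ≤ Real.exp (-γ * ‖x - y‖) := hloc j x y hx hy hxy
      _ = Real.exp (-γ * ‖x - y‖) * Real.exp ((L:ℝ)^β) * Real.exp (-(L:ℝ)^β) := by
          rw [mul_assoc, ← Real.exp_add]; simp
      _ ≤ Real.exp (-γ * ‖x - y‖) * Real.exp ((L:ℝ)^β) * |E - Ev j| := by
          have := hres j
          exact mul_le_mul_of_nonneg_left this (by positivity)
  calc ‖∑ j, ψ j x * (starRingEnd ℂ) (ψ j y) / ((E : ℂ) - (Ev j : ℂ))‖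
      ≤ ∑ j, ‖ψ j x * (starRingEnd ℂ) (ψ j y) / ((E : ℂ) - (Ev j : ℂ))‖ := by
        exact norm_sum_le _ _
    _ ≤ ∑ _j : Fin n, Real.exp (-γ * ‖x - y‖) * Real.exp ((L : ℝ) ^ β) :=
        Finset.sum_le_sum fun j _ => hterm j
    _ = (n : ℝ) * (Real.exp (-γ * ‖x - y‖) * Real.exp ((L : ℝ) ^ β)) := by
        simp [Finset.sum_const, nsmul_eq_mul]
    _ ≤ Real.exp ((L:ℝ)^β) * (Real.exp (-γ * ‖x - y‖) * Real.exp ((L : ℝ) ^ β)) := by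
        apply mul_le_mul_of_nonneg_right _ (by positivity)
        calc (n:ℝ) ≤ (2*(L:ℝ)+1)^d := hn
          _ = Real.exp (Real.log ((2*(L:ℝ)+1)^d)) := by
              rw [Real.exp_log]; positivity
          _ ≤ Real.exp ((L:ℝ)^β) := Real.exp_le_exp.mpr hlog
    _ = Real.exp (-γ * ‖x - y‖ + 2 * (L : ℝ) ^ β) := by
        rw [← Real.exp_add, ← Real.exp_add]; ring_nf
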